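/- arXiv:math/9904152 — 2 statements merged into one kernel-verified Lean document; each statement's English description precedes it below -/
import Mathlib

section
/- Let k be a field and A ⊆ k((z)) a k-subalgebra such that the subgroup {ν(a/b) : a, b ∈ A \ {0}} of ℤ equals ℤ (i.e. rank A = 1) and A ∩ k[[z]] = k. If there exist f, g ∈ A with ν(f), ν(g) < 0 and gcd(ν(f), ν(g)) = 1, then dim_k(k((z)) / (A + k[[z]])) < ∞. -/
/- Common setup: `k((z))` is `LaurentSeries k`, `V = k((z)) ⊕ k((z))`,
`V₀ = k[[z]] ⊕ k[[z]]` (realized as the subspace of Laurent series with no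
negative coefficients), `ν` is the `z`-adic valuation (`HahnSeries.order`). -/

set_option synthInstance.maxHeartbeats 1000000
set_option maxHeartbeats 1000000

noncomputable section

variable (k : Type) [Field k]

instance : IsScalarTower k (LaurentSeries k) (LaurentSeries k) :=
  ⟨fun c a b => by
    rw [smul_eq_mul, smul_eq_mul, ← HahnSeries.single_zero_mul_eq_smul,
      ← HahnSeries.single_zero_mul_eq_smul, mul_assoc]⟩

instance (P : Submodule k (LaurentSeries k)) : HasQuotient ↥P (Submodule k ↥P) :=
  Submodule.hasQuotient

instance (P : Submodule k (LaurentSeries k × LaurentSeries k)) :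
    HasQuotient ↥P (Submodule k ↥P) :=
  Submodule.hasQuotient

/-- The `k`-subspace `z^i k[[z]]` of `k((z))`. -/
def shiftSub (i : ℤ) : Submodule k (LaurentSeries k) where
  carrier := {f | ∀ n : ℤ, n < i → f.coeff n = 0}
  add_mem' := by
    intro a b ha hb n hn
    simp [HahnSeries.coeff_add, ha n hn, hb n hn]
  zero_mem' := by intro n hn; simp
  smul_mem' := by
    intro c a ha n hn
    simp [HahnSeries.coeff_smul, ha n hn]

/-- `k[[z]]` as a `k`-subspace of `k((z))`. -/
abbrev posSub : Submodule k (LaurentSeries k) := shiftSub k 0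

/-- `V = k((z)) ⊕ k((z))`. -/
abbrev V2 := LaurentSeries k × LaurentSeries k

/-- `z^i V₀ = z^i k[[z]] ⊕ z^i k[[z]]`. -/
def Vsub (i : ℤ) : Submodule k (V2 k) := (shiftSub k i).prod (shiftSub k i)

/-- `V₀ = k[[z]] ⊕ k[[z]]`. -/
abbrev V0 : Submodule k (V2 k) := Vsub k 0

/-- The line `l₁ = k((z)) ⊕ 0`. -/
def lineOne : Submodule k (V2 k) := (⊤ : Submodule k (LaurentSeries k)).prod ⊥

/-- The line `l₂ = 0 ⊕ k((z))`. -/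
def lineTwo : Submodule k (V2 k) := (⊥ : Submodule k (LaurentSeries k)).prod ⊤

/-- `W ⊆ V` is a Fredholm subspace of index `μ` with respect to `V₀`. -/
def IsFredholm (μ : ℤ) (W : Submodule k (V2 k)) : Prop :=
  FiniteDimensional k ↥(W ⊓ V0 k) ∧ FiniteDimensional k (V2 k ⧸ (W ⊔ V0 k)) ∧
    (Module.finrank k ↥(W ⊓ V0 k) : ℤ) - Module.finrank k (V2 k ⧸ (W ⊔ V0 k)) = μ

/-- The stabilizer ring `A_W = {f ∈ k((z)) : f W ⊆ W}`, as a `k`-subspace of `k((z))`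
(`f` acts diagonally on `V`). -/
def AWsub (W : Submodule k (V2 k)) : Submodule k (LaurentSeries k) where
  carrier := {f | ∀ w ∈ W, f • w ∈ W}
  add_mem' := by
    intro a b ha hb w hw
    rw [add_smul]
    exact W.add_mem (ha w hw) (hb w hw)
  zero_mem' := by
    intro w hw
    have h : (0 : LaurentSeries k) • w = 0 := by ext <;> simp
    exact h ▸ W.zero_mem
  smul_mem' := by
    intro c a ha w hw
    rw [smul_assoc]
    exact W.smul_mem c (ha w hw)

/-- A `k`-subalgebra of `k((z))` viewed as a `k`-subspace. -/
def subalgSub (A : Subalgebra k (LaurentSeries k)) : Submodule k (LaurentSeries k) where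
  carrier := A
  add_mem' := fun ha hb => A.add_mem ha hb
  zero_mem' := A.zero_mem
  smul_mem' := fun c a ha => by
    rw [← HahnSeries.single_zero_mul_eq_smul]
    refine A.mul_mem ?_ ha
    have h := A.algebraMap_mem c
    have e : algebraMap k (LaurentSeries k) c = HahnSeries.single (0 : ℤ) c := by
      rw [HahnSeries.algebraMap_apply', PowerSeries.algebraMap_apply,
        HahnSeries.ofPowerSeries_C, HahnSeries.C_apply]
      simp
    rwa [e] at h

lemma rep_lemma (m n d : ℕ) (hm : 0 < m) (hn : 0 < n) (cop : Nat.Coprime m n)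
    (hd : m * n ≤ d) : ∃ a b : ℕ, a * m + b * n = d := by
  rcases eq_or_lt_of_le (show 1 ≤ m from hm) with hm1 | hm1
  · exact ⟨d, 0, by rw [← hm1]; omega⟩
  rcases eq_or_lt_of_le (show 1 ≤ n from hn) with hn1 | hn1
  · exact ⟨0, d, by rw [← hn1]; omega⟩
  have hfrob := frobeniusNumber_pair cop hm1 hn1
  have hd' : d ∈ AddSubmonoid.closure ({m, n} : Set ℕ) := by
    by_contra hc
    have h1 := hfrob.2 hc
    have h2 : m + n ≤ m * n := Nat.add_le_mul hm1 hn1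
    omega
  obtain ⟨a, b, hab⟩ := (AddSubmonoid.mem_closure_pair m n d).mp hd'
  exact ⟨a, b, by simpa [smul_eq_mul] using hab⟩

/-- If `A ⊆ k((z))` is a `k`-subalgebra with value group of `Frac A`
equal to `ℤ` (rank `A = 1`), `A ∩ k[[z]] = k`, and there are `f, g ∈ A` of negative
valuations with `gcd(ν(f), ν(g)) = 1`, then `dim_k k((z)) / (A + k[[z]]) < ∞`. -/
theorem stmt3 (A : Subalgebra k (LaurentSeries k))
    (hrk : {n : ℤ | ∃ a ∈ A, ∃ b ∈ A, a ≠ 0 ∧ b ≠ 0 ∧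
        (a : LaurentSeries k).order - (b : LaurentSeries k).order = n} = Set.univ)
    (hAk : (A : Set (LaurentSeries k)) ∩ (posSub k : Set (LaurentSeries k)) =
      Set.range (algebraMap k (LaurentSeries k)))
    (hfg : ∃ f ∈ A, ∃ g ∈ A, f ≠ 0 ∧ g ≠ 0 ∧
      (f : LaurentSeries k).order < 0 ∧ (g : LaurentSeries k).order < 0 ∧
      Int.gcd (f : LaurentSeries k).order (g : LaurentSeries k).order = 1) :
    FiniteDimensional k (LaurentSeries k ⧸ (subalgSub k A ⊔ posSub k)) := by
  classical
  obtain ⟨f, hfA, g, hgA, hf0, hg0, hford, hgord, hcop⟩ := hfg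
  set m : ℕ := (f : LaurentSeries k).order.natAbs with hmdef
  set n : ℕ := (g : LaurentSeries k).order.natAbs with hndef
  have hm' : 0 < m := by omega
  have hn' : 0 < n := by omega
  have hmo : (f : LaurentSeries k).order = -(m : ℤ) := by omega
  have hno : (g : LaurentSeries k).order = -(n : ℤ) := by omega
  have cop : Nat.Coprime m n := hcop
  set N : ℕ := m * n with hNdef
  set T : Set (LaurentSeries k) :=
    (fun j : ℕ => (HahnSeries.single (-(j : ℤ)) (1 : k) : LaurentSeries k)) '' Set.Iio N
    with hTdef
  have hT : T.Finite := (Set.finite_Iio N).image _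
  set S : Submodule k (LaurentSeries k) :=
    subalgSub k A ⊔ posSub k ⊔ Submodule.span k T with hSdef
  have hposS : ∀ x : LaurentSeries k, 0 ≤ x.order → x ∈ S := by
    intro x hx
    refine Submodule.mem_sup_left (Submodule.mem_sup_right ?_)
    show ∀ i : ℤ, i < 0 → x.coeff i = 0
    intro i hi
    exact HahnSeries.coeff_eq_zero_of_lt_order (lt_of_lt_of_le hi hx)
  have hAS : ∀ x : LaurentSeries k, x ∈ A → x ∈ S := fun x hx =>
    Submodule.mem_sup_left (Submodule.mem_sup_left hx)
  have hTS : ∀ j : ℕ, j < N →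
      (HahnSeries.single (-(j : ℤ)) (1 : k) : LaurentSeries k) ∈ S := fun j hj =>
    Submodule.mem_sup_right (Submodule.subset_span ⟨j, hj, rfl⟩)
  have key : ∀ c : ℕ, ∀ x : LaurentSeries k, (-x.order).toNat ≤ c → x ∈ S := by
    intro c
    induction c with
    | zero =>
      intro x hx
      exact hposS x (by omega)
    | succ c ih =>
      intro x hx
      by_cases hord : 0 ≤ x.order
      · exact hposS x hord
      push_neg at hord
      have hx0 : x ≠ 0 := fun h => by simp [h] at hord
      set d : ℕ := (-x.order).toNat with hddef
      have hdord : x.order = -(d : ℤ) := by omega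
      obtain ⟨w, hwS, hw0, hword⟩ :
          ∃ w : LaurentSeries k, w ∈ S ∧ w ≠ 0 ∧ w.order = x.order := by
        by_cases hdN : d < N
        · refine ⟨HahnSeries.single (-(d : ℤ)) 1, hTS d hdN,
            HahnSeries.single_ne_zero one_ne_zero, ?_⟩
          rw [HahnSeries.order_single one_ne_zero, hdord]
        · push_neg at hdN
          obtain ⟨a, b, hab⟩ := rep_lemma m n d hm' hn' cop hdN
          refine ⟨f ^ a * g ^ b,
            hAS _ (A.mul_mem (A.pow_mem hfA a) (A.pow_mem hgA b)),
            mul_ne_zero (pow_ne_zero _ hf0) (pow_ne_zero _ hg0), ?_⟩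
          rw [HahnSeries.order_mul (pow_ne_zero _ hf0) (pow_ne_zero _ hg0),
            HahnSeries.order_pow, HahnSeries.order_pow, hmo, hno, hdord, ← hab]
          push_cast [nsmul_eq_mul]
          ring
      set cc : k := x.coeff x.order / w.coeff w.order with hccdef
      set y : LaurentSeries k := x - cc • w with hydef
      have hyx : x = y + cc • w := by rw [hydef]; ring
      rw [hyx]
      refine S.add_mem (ih y ?_) (S.smul_mem cc hwS)
      rcases eq_or_ne y 0 with h0 | h0
      · simp [h0]
      have hcoe : ∀ i : ℤ, i ≤ x.order → y.coeff i = 0 := by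
        intro i hi
        rcases lt_or_eq_of_le hi with hi | hi
        · rw [hydef, HahnSeries.coeff_sub, HahnSeries.coeff_smul,
            HahnSeries.coeff_eq_zero_of_lt_order hi,
            HahnSeries.coeff_eq_zero_of_lt_order (hword ▸ hi)]
          simp
        · subst hi
          rw [hydef, HahnSeries.coeff_sub, HahnSeries.coeff_smul, hccdef, hword, smul_eq_mul,
            div_mul_cancel₀ _ (hword ▸ HahnSeries.coeff_order_eq_zero.not.2 hw0), sub_self]
      have hlt : x.order < y.order := by
        by_contra hle
        push_neg at hle
        exact HahnSeries.coeff_order_eq_zero.not.2 h0 (hcoe _ hle)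
      omega
  have hS : S = ⊤ := by
    rw [eq_top_iff]
    intro x _
    exact key (-x.order).toNat x le_rfl
  have hmap : Submodule.map (subalgSub k A ⊔ posSub k).mkQ (Submodule.span k T) = ⊤ := by
    rw [Submodule.map_mkQ_eq_top]
    exact hS
  refine ⟨Submodule.fg_def.mpr ⟨(subalgSub k A ⊔ posSub k).mkQ '' T, hT.image _, ?_⟩⟩
  rw [← Submodule.map_span, hmap]


end
end

section
/- Let k be a field, V = k((z)) ⊕ k((z)), V_0 = k[[z]] ⊕ k[[z]], W ⊆ V a Fredholm k-subspace of index μ, and l_1 = k((z)) ⊕ 0. If W ∩ l_1 ≠ 0 and dim_k(k((z))/(A_W + k[[z]])) < ∞ where A_W = {f ∈ k((z)) : fW ⊆ W}, then dim_k(W ∩ l_1 ∩ V_0) < ∞ and dim_k(l_1/(W ∩ l_1 + V_0 ∩ l_1)) < ∞. -/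
/- Common setup: `k((z))` is `LaurentSeries k`, `V = k((z)) ⊕ k((z))`,
`V₀ = k[[z]] ⊕ k[[z]]` (realized as the subspace of Laurent series with no
negative coefficients), `ν` is the `z`-adic valuation (`HahnSeries.order`). -/

set_option synthInstance.maxHeartbeats 1000000
set_option maxHeartbeats 1000000

noncomputable section

variable (k : Type) [Field k]

-- Lemma A: if M⧸T is fin-dim and T ≤ S ⊔ F with F FG, then M⧸S is fin-dim
theorem quot_fin {K M : Type*} [Field K] [AddCommGroup M] [Module K M]
    (S T F : Submodule K M) [hT : FiniteDimensional K (M ⧸ T)] (hF : F.FG)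
    (hTS : T ≤ S ⊔ F) : FiniteDimensional K (M ⧸ S) := by
  obtain ⟨s, hs⟩ := Module.finite_def.mp hT
  set g : (M ⧸ T) → M := Function.surjInv (Submodule.mkQ_surjective T) with hg
  have hginv : ∀ y, T.mkQ (g y) = y := fun y =>
    Function.surjInv_eq (Submodule.mkQ_surjective T) y
  set G : Submodule K M := Submodule.span K (g '' s) with hGdef
  have hmapG : G.map T.mkQ = ⊤ := by
    rw [hGdef, Submodule.map_span, ← Set.image_comp]
    have : (⇑T.mkQ ∘ g) '' ↑s = ↑s := by
      ext y; constructor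
      · rintro ⟨x, hx, rfl⟩; simpa [hginv] using hx
      · intro hy; exact ⟨y, hy, hginv y⟩
    rw [this, hs]
  have hsup : T ⊔ G = ⊤ := by
    have := Submodule.comap_map_eq T.mkQ G
    rw [hmapG, Submodule.comap_top, Submodule.ker_mkQ] at this
    rw [sup_comm, this]
  have htop : S ⊔ (F ⊔ G) = ⊤ := by
    apply top_unique
    rw [← hsup]
    apply sup_le
    · exact le_trans hTS (sup_le le_sup_left (le_trans le_sup_left le_sup_right))
    · exact le_trans le_sup_right le_sup_right
  apply Module.finite_def.mpr
  have h2 : (⊤ : Submodule K (M ⧸ S)) = Submodule.map S.mkQ ⊤ := by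
    rw [Submodule.map_top, Submodule.range_mkQ]
  have : (⊤ : Submodule K (M ⧸ S)) = (F ⊔ G).map S.mkQ := by
    rw [h2, ← htop, Submodule.map_sup, Submodule.mkQ_map_self, bot_sup_eq]
  rw [this]
  exact Submodule.FG.map _ ((hF.sup (Submodule.fg_span (Set.Finite.image g s.finite_toSet))))

theorem quot_fin_mono {K M : Type*} [Field K] [AddCommGroup M] [Module K M]
    {S T : Submodule K M} (hST : S ≤ T) [FiniteDimensional K (M ⧸ S)] :
    FiniteDimensional K (M ⧸ T) :=
  quot_fin T S ⊥ Submodule.fg_bot (by simpa using hST)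


section Helpers

variable {k : Type} [Field k]

theorem mem_shiftSub_of_ne {i : ℤ} {f : LaurentSeries k} (hf : f ≠ 0) :
    f ∈ shiftSub k i ↔ i ≤ f.order := by
  constructor
  · intro h
    by_contra hc
    push_neg at hc
    exact (HahnSeries.coeff_order_eq_zero.not.2 hf) (h _ hc)
  · intro h n hn
    exact HahnSeries.coeff_eq_zero_of_lt_order (lt_of_lt_of_le hn h)

theorem shiftSub_mono {i j : ℤ} (h : i ≤ j) : shiftSub k j ≤ shiftSub k i :=
  fun f hf n hn => hf n (lt_of_lt_of_le hn h)

/-- multiplication by a nonzero Laurent series as a k-linear equiv -/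
def mulLEquiv (f₀ : LaurentSeries k) (h : f₀ ≠ 0) :
    LaurentSeries k ≃ₗ[k] LaurentSeries k where
  toFun g := f₀ * g
  invFun g := f₀⁻¹ * g
  map_add' := mul_add f₀
  map_smul' c g := by simp [mul_smul_comm]
  left_inv g := by
    show f₀⁻¹ * (f₀ * g) = g
    rw [← mul_assoc, inv_mul_cancel₀ h, one_mul]
  right_inv g := by
    show f₀ * (f₀⁻¹ * g) = g
    rw [← mul_assoc, mul_inv_cancel₀ h, one_mul]

theorem mulLEquiv_apply (f₀ : LaurentSeries k) (h : f₀ ≠ 0) (g : LaurentSeries k) :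
    mulLEquiv f₀ h g = f₀ * g := rfl

theorem map_mul_shiftSub (f₀ : LaurentSeries k) (h : f₀ ≠ 0) :
    (posSub k).map (mulLEquiv f₀ h : LaurentSeries k →ₗ[k] LaurentSeries k) = shiftSub k f₀.order := by
  apply le_antisymm
  · rintro _ ⟨g, hg, rfl⟩
    rcases eq_or_ne g 0 with rfl | hg0
    · simp only [LinearEquiv.coe_coe, mulLEquiv_apply, mul_zero]
      exact (shiftSub k f₀.order).zero_mem
    · rw [LinearEquiv.coe_coe, mulLEquiv_apply, mem_shiftSub_of_ne (mul_ne_zero h hg0),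
        HahnSeries.order_mul h hg0]
      have : (0 : ℤ) ≤ g.order := (mem_shiftSub_of_ne hg0).mp hg
      omega
  · intro x hx
    rcases eq_or_ne x 0 with rfl | hx0
    · exact Submodule.zero_mem _
    · refine ⟨f₀⁻¹ * x, ?_, ?_⟩
      · have hne : f₀⁻¹ * x ≠ 0 := mul_ne_zero (inv_ne_zero h) hx0
        show f₀⁻¹ * x ∈ posSub k
        rw [mem_shiftSub_of_ne hne]
        have hxx : f₀ * (f₀⁻¹ * x) = x := by
          rw [← mul_assoc, mul_inv_cancel₀ h, one_mul]
        have := HahnSeries.order_mul h hne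
        rw [hxx] at this
        have hox : f₀.order ≤ x.order := (mem_shiftSub_of_ne hx0).mp hx
        omega
      · rw [LinearEquiv.coe_coe, mulLEquiv_apply, ← mul_assoc, mul_inv_cancel₀ h, one_mul]

/-- one step: `z^n k[[z]] ⊆ z^{n+1} k[[z]] + k·z^n` -/
theorem shiftSub_step (n : ℤ) :
    shiftSub k n ≤ shiftSub k (n + 1) ⊔
      Submodule.span k {(HahnSeries.single n (1 : k) : LaurentSeries k)} := by
  intro f hf
  set p : LaurentSeries k := f.coeff n • HahnSeries.single n (1 : k) with hp
  have h1 : f - p ∈ shiftSub k (n + 1) := by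
    intro t ht
    rcases lt_or_eq_of_le (Int.lt_add_one_iff.mp ht) with ht' | rfl
    · rw [HahnSeries.coeff_sub, hf t ht', hp, HahnSeries.coeff_smul,
        HahnSeries.coeff_single_of_ne (ne_of_lt ht')]
      simp
    · rw [HahnSeries.coeff_sub, hp, HahnSeries.coeff_smul,
        HahnSeries.coeff_single_same]
      simp
  have h2 : p ∈ Submodule.span k {(HahnSeries.single n (1 : k) : LaurentSeries k)} :=
    Submodule.smul_mem _ _ (Submodule.mem_span_singleton_self _)
  have : f = (f - p) + p := by ring
  rw [this]
  exact Submodule.add_mem _ (Submodule.mem_sup_left h1) (Submodule.mem_sup_right h2)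

theorem shiftSub_findim (n : ℤ) (d : ℕ) :
    ∃ F : Submodule k (LaurentSeries k), FiniteDimensional k F ∧
      shiftSub k n ≤ shiftSub k (n + d) ⊔ F := by
  induction d with
  | zero => exact ⟨⊥, inferInstance, by simp⟩
  | succ d ih =>
    obtain ⟨F, hF, hle⟩ := ih
    refine ⟨Submodule.span k {(HahnSeries.single ((n : ℤ) + d) (1 : k) : LaurentSeries k)} ⊔ F,
      Submodule.finiteDimensional_sup _ _, ?_⟩
    have step := shiftSub_step (k := k) ((n : ℤ) + d)
    calc shiftSub k n ≤ shiftSub k (n + d) ⊔ F := hle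
      _ ≤ (shiftSub k (n + d + 1) ⊔
            Submodule.span k {(HahnSeries.single ((n : ℤ) + d) (1 : k) : LaurentSeries k)}) ⊔ F :=
          sup_le_sup_right step F
      _ = shiftSub k (n + (d + 1 : ℕ)) ⊔
            (Submodule.span k {(HahnSeries.single ((n : ℤ) + d) (1 : k) : LaurentSeries k)} ⊔ F) := by
          have he : ((n : ℤ) + d + 1) = n + ((d : ℕ) + 1 : ℕ) := by push_cast; ring
          rw [sup_assoc, he]

end Helpers


/-- Let `W` be Fredholm of index `μ` with `W ∩ l₁ ≠ 0` and
`dim_k k((z))/(A_W + k[[z]]) < ∞`.  Then `W ∩ l₁` is a Fredholm subspace of `l₁`: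
`dim_k (W ∩ l₁ ∩ V₀) < ∞` and `dim_k l₁/(W ∩ l₁ + V₀ ∩ l₁) < ∞`. -/
theorem stmt7 (μ : ℤ) (W : Submodule k (V2 k)) (hW : IsFredholm k μ W)
    (hl : W ⊓ lineOne k ≠ ⊥)
    (hA : FiniteDimensional k (LaurentSeries k ⧸ (AWsub k W ⊔ posSub k))) :
    FiniteDimensional k ↥(W ⊓ lineOne k ⊓ V0 k) ∧
    FiniteDimensional k
      (↥(lineOne k) ⧸
        Submodule.comap (lineOne k).subtype (W ⊓ lineOne k ⊔ V0 k ⊓ lineOne k)) := by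
  constructor
  · haveI := hW.1
    exact Submodule.finiteDimensional_of_le (inf_le_inf_right _ inf_le_left)
  · -- pick a nonzero element of W ⊓ l₁
    obtain ⟨x, hxWl, hx0⟩ := Submodule.exists_mem_ne_zero_of_ne_bot hl
    have hxW : x ∈ W := hxWl.1
    have hx2 : x.2 = 0 := (Submodule.mem_bot k).mp (Submodule.mem_prod.mp hxWl.2).2
    set f₀ : LaurentSeries k := x.1 with hf₀def
    have hf₀ : f₀ ≠ 0 := by
      intro hc
      apply hx0
      exact Prod.ext_iff.mpr ⟨hc, hx2⟩
    have hfW : (f₀, (0 : LaurentSeries k)) ∈ W := by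
      have hxx : (f₀, (0 : LaurentSeries k)) = x := Prod.ext_iff.mpr ⟨rfl, hx2.symm⟩
      rw [hxx]; exact hxW
    set U : Submodule k (LaurentSeries k) :=
      W.comap (LinearMap.inl k (LaurentSeries k) (LaurentSeries k)) with hUdef
    have hU : ∀ f : LaurentSeries k, f ∈ U ↔ (f, (0 : LaurentSeries k)) ∈ W := by
      intro f
      rw [hUdef, Submodule.mem_comap, LinearMap.inl_apply]
    set e := mulLEquiv f₀ hf₀ with hedef
    set n : ℤ := f₀.order with hndef
    -- f₀ · A_W ⊆ U
    have hAU : (AWsub k W).map (e : LaurentSeries k →ₗ[k] LaurentSeries k) ≤ U := by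
      rintro _ ⟨a, ha, rfl⟩
      rw [hU, hedef, LinearEquiv.coe_coe, mulLEquiv_apply]
      have h1 : a • ((f₀, (0 : LaurentSeries k)) : V2 k) ∈ W := ha _ hfW
      have h2 : a • ((f₀, (0 : LaurentSeries k)) : V2 k) = (f₀ * a, 0) := by
        rw [Prod.smul_mk, smul_eq_mul, smul_zero, mul_comm]
      rwa [h2] at h1
    have hmap1 : (AWsub k W ⊔ posSub k).map (e : LaurentSeries k →ₗ[k] LaurentSeries k) = (AWsub k W).map (e : LaurentSeries k →ₗ[k] LaurentSeries k) ⊔ shiftSub k n := by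
      rw [Submodule.map_sup, map_mul_shiftSub]
    haveI : FiniteDimensional k
        (LaurentSeries k ⧸ ((AWsub k W).map (e : LaurentSeries k →ₗ[k] LaurentSeries k) ⊔ shiftSub k n)) :=
      (Submodule.Quotient.equiv _ _ e hmap1).finiteDimensional
    set m : ℤ := max n 0 with hmdef
    set d : ℕ := (m - n).toNat with hddef
    have hmnd : n + (d : ℤ) = m := by
      rw [hddef, Int.toNat_of_nonneg (by omega : (0:ℤ) ≤ m - n)]
      ring
    obtain ⟨F, hFfd, hle⟩ := shiftSub_findim (k := k) n d
    rw [hmnd] at hle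
    have hFG : F.FG := (Submodule.fg_top F).mp (Module.finite_def.mp hFfd)
    haveI : FiniteDimensional k
        (LaurentSeries k ⧸ ((AWsub k W).map (e : LaurentSeries k →ₗ[k] LaurentSeries k) ⊔ shiftSub k m)) := by
      refine quot_fin _ ((AWsub k W).map (e : LaurentSeries k →ₗ[k] LaurentSeries k) ⊔ shiftSub k n) F hFG ?_
      rw [sup_assoc]
      exact sup_le le_sup_left (le_trans hle le_sup_right)
    haveI hfinU : FiniteDimensional k (LaurentSeries k ⧸ (U ⊔ posSub k)) :=
      quot_fin_mono (sup_le_sup hAU (shiftSub_mono (le_max_right n 0)))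
    -- transfer along the isomorphism l₁ ≅ k((z))
    let eL : ↥(lineOne k) ≃ₗ[k] LaurentSeries k :=
      { toFun := fun y => (y : V2 k).1
        map_add' := fun a b => rfl
        map_smul' := fun c a => rfl
        invFun := fun f => ⟨(f, 0), Submodule.mem_prod.mpr ⟨trivial, Submodule.zero_mem ⊥⟩⟩
        left_inv := fun a => Subtype.ext (Prod.ext_iff.mpr
          ⟨rfl, ((Submodule.mem_bot k).mp (Submodule.mem_prod.mp a.2).2).symm⟩)
        right_inv := fun f => rfl }
    have hmapL : Submodule.map (eL : ↥(lineOne k) →ₗ[k] LaurentSeries k)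
        (Submodule.comap (lineOne k).subtype (W ⊓ lineOne k ⊔ V0 k ⊓ lineOne k))
        = U ⊔ posSub k := by
      apply le_antisymm
      · rintro _ ⟨y, hy, rfl⟩
        have hy' : (y : V2 k) ∈ W ⊓ lineOne k ⊔ V0 k ⊓ lineOne k := hy
        obtain ⟨a, ha, b, hb, hab⟩ := Submodule.mem_sup.mp hy'
        have ha2 : a.2 = 0 := (Submodule.mem_bot k).mp (Submodule.mem_prod.mp ha.2).2
        have hb2 : b.2 = 0 := (Submodule.mem_bot k).mp (Submodule.mem_prod.mp hb.2).2
        refine Submodule.mem_sup.mpr ⟨a.1, ?_, b.1, ?_, ?_⟩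
        · rw [hU]
          have : (a.1, (0 : LaurentSeries k)) = a := Prod.ext_iff.mpr ⟨rfl, ha2.symm⟩
          rw [this]; exact ha.1
        · exact (Submodule.mem_prod.mp hb.1).1
        · have : eL y = (y : V2 k).1 := rfl
          rw [LinearEquiv.coe_coe, this, ← hab, Prod.fst_add]
      · apply sup_le
        · intro f hf
          refine ⟨⟨(f, 0), Submodule.mem_prod.mpr ⟨trivial, Submodule.zero_mem ⊥⟩⟩, ?_, rfl⟩
          refine Submodule.mem_sup_left ⟨?_, ?_⟩
          · exact (hU f).mp hf
          · exact Submodule.mem_prod.mpr ⟨trivial, Submodule.zero_mem ⊥⟩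
        · intro f hf
          refine ⟨⟨(f, 0), Submodule.mem_prod.mpr ⟨trivial, Submodule.zero_mem ⊥⟩⟩, ?_, rfl⟩
          refine Submodule.mem_sup_right ⟨?_, ?_⟩
          · exact Submodule.mem_prod.mpr ⟨hf, (shiftSub k 0).zero_mem⟩
          · exact Submodule.mem_prod.mpr ⟨trivial, Submodule.zero_mem ⊥⟩
    exact (Submodule.Quotient.equiv _ _ eL hmapL).symm.finiteDimensional

end
end
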